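/- Let (X, f) be a dynamical system, i.e., X a nonempty compact metric space and f : X → X continuous (not necessarily surjective). Then there exists an inverse sequence (G, F) of twinned graph homomorphisms such that (X, f) is topologically conjugate to the induced quotient system (Y, T), where Y = V_G / E_F with the quotient topology, π : V_G → Y is the quotient map, and T : Y → Y is the unique continuous map satisfying T(π(x)) = π(y) whenever (x, y) ∈ E_G. That is, there exists a homeomorphism ψ : Y → X with f ∘ ψ = ψ ∘ T. -/

import Mathlib

set_option linter.unusedSectionVars false
open Metric Set

/-- An inverse sequence of twinned graph homomorphisms `(𝒢, ℱ)`: graphs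
`G_i = (V i, EG i)` and `F_i = (V i, EF i)` on the same finite vertex sets, sharing
connecting maps `φ i : V (i+1) → V i`, satisfying conditions (DS0)–(DS3b). -/
structure TwinnedSeq : Type 1 where
  V : ℕ → Type
  fintype : ∀ i, Fintype (V i)
  EG : ∀ i, V i → V i → Prop
  EF : ∀ i, V i → V i → Prop
  φ : ∀ i, V (i + 1) → V i
  /-- (DS0) `G_0` has exactly one vertex. -/
  ds0_nonempty : Nonempty (V 0)
  ds0_subsingleton : ∀ v w : V 0, v = w
  /-- (DS1) each `φ i` is an edge-surjective graph homomorphism for `𝒢`, and every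
  vertex of every `G_i` has an outgoing edge. -/
  ds1_hom : ∀ i, ∀ u v : V (i + 1), EG (i + 1) u v → EG i (φ i u) (φ i v)
  ds1_edge_surj : ∀ i, ∀ u v : V i, EG i u v →
    ∃ a b : V (i + 1), EG (i + 1) a b ∧ φ i a = u ∧ φ i b = v
  ds1_out : ∀ i, ∀ v : V i, ∃ w, EG i v w
  /-- (DS2) each `φ i` is a graph homomorphism for `ℱ`, each `EF i` is symmetric and
  reflexive. -/
  ds2_hom : ∀ i, ∀ u v : V (i + 1), EF (i + 1) u v → EF i (φ i u) (φ i v)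
  ds2_symm : ∀ i, ∀ u v : V i, EF i u v → EF i v u
  ds2_refl : ∀ i, ∀ v : V i, EF i v v
  /-- (DS3) -/
  ds3 : ∀ i, ∀ a b a' b' : V (i + 1),
    EF (i + 1) a b → EG (i + 1) a a' → EG (i + 1) b b' → EF i (φ i a') (φ i b')
  /-- (DS3b) -/
  ds3b : ∀ i, ∀ a b c : V (i + 1), EF (i + 1) a b → EF (i + 1) b c → EF i (φ i a) (φ i c)

/-- The inverse limit vertex set `V_G`. -/
def TwLimit (S : TwinnedSeq) : Type :=
  {x : ∀ i, S.V i // ∀ i, x i = S.φ i (x (i + 1))}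

/-- `V_G` as a subspace of the product of the discrete (finite) spaces `V i`. -/
instance (S : TwinnedSeq) : TopologicalSpace (TwLimit S) :=
  letI : ∀ i, TopologicalSpace (S.V i) := fun _ => ⊥
  inferInstanceAs (TopologicalSpace {x : ∀ i, S.V i // ∀ i, x i = S.φ i (x (i + 1))})

/-- The inverse limit relation `E_G`. -/
def limEG (S : TwinnedSeq) (x y : TwLimit S) : Prop :=
  ∀ i, S.EG i (x.1 i) (y.1 i)

/-- The inverse limit relation `E_F`. -/
def limEF (S : TwinnedSeq) (x y : TwLimit S) : Prop :=
  ∀ i, S.EF i (x.1 i) (y.1 i)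


section Aux

section Aux
variable {X : Type} [MetricSpace X] [CompactSpace X] [Nonempty X]

lemma uc_aux (f : X → X) (hf : Continuous f) {ε : ℝ} (hε : 0 < ε) :
    ∃ δ > 0, ∀ x y : X, dist x y ≤ δ → dist (f x) (f y) ≤ ε := by
  obtain ⟨δ, hδ, h⟩ := Metric.uniformContinuous_iff.mp
    (CompactSpace.uniformContinuous_of_continuous hf) ε hε
  exact ⟨δ / 2, by linarith, fun x y hxy => le_of_lt (h (lt_of_le_of_lt hxy (by linarith)))⟩

noncomputable def dlt (f : X → X) (hf : Continuous f) (ε : ℝ) : ℝ :=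
  if h : 0 < ε then (uc_aux f hf h).choose else 1

lemma dlt_pos (f : X → X) (hf : Continuous f) (ε : ℝ) : 0 < dlt f hf ε := by
  unfold dlt; split
  · exact (uc_aux f hf ‹_›).choose_spec.1
  · norm_num

lemma dlt_spec (f : X → X) (hf : Continuous f) {ε : ℝ} (hε : 0 < ε) :
    ∀ x y : X, dist x y ≤ dlt f hf ε → dist (f x) (f y) ≤ ε := by
  unfold dlt; rw [dif_pos hε]; exact (uc_aux f hf hε).choose_spec.2

noncomputable def eta (f : X → X) (hf : Continuous f) : ℕ → ℝ
  | 0 => 1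
  | n + 1 => min (eta f hf n / 4) (min (dlt f hf (eta f hf n) / 8) ((1/2 : ℝ) ^ n))

lemma eta_pos (f : X → X) (hf : Continuous f) : ∀ n, 0 < eta f hf n
  | 0 => one_pos
  | n + 1 => by
      have h1 := eta_pos f hf n
      have h2 := dlt_pos f hf (eta f hf n)
      have h3 : (0:ℝ) < (1/2 : ℝ) ^ n := by positivity
      simp only [eta, lt_min_iff]
      exact ⟨by linarith, by linarith, h3⟩

lemma eta_succ_le (f : X → X) (hf : Continuous f) (n : ℕ) :
    eta f hf (n + 1) ≤ eta f hf n / 4 := min_le_left _ _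

lemma eta_mono (f : X → X) (hf : Continuous f) (n : ℕ) :
    eta f hf (n + 1) ≤ eta f hf n := by
  have := eta_succ_le f hf n; have := eta_pos f hf n; linarith

lemma eta_le_pow (f : X → X) (hf : Continuous f) (n : ℕ) :
    eta f hf (n + 1) ≤ (1/2 : ℝ) ^ n :=
  le_trans (min_le_right _ _) (min_le_right _ _)

lemma eta_contract (f : X → X) (hf : Continuous f) (n : ℕ) {x y : X}
    (h : dist x y ≤ 5 * eta f hf (n + 1)) : dist (f x) (f y) ≤ eta f hf n := by
  have h8 : eta f hf (n + 1) ≤ dlt f hf (eta f hf n) / 8 :=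
    le_trans (min_le_right _ _) (min_le_left _ _)
  have hd := dlt_pos f hf (eta f hf n)
  exact dlt_spec f hf (eta_pos f hf n) x y (by linarith)

lemma exists_net (ε : ℝ) (hε : 0 < ε) :
    ∃ s : Finset X, ∀ x : X, ∃ w ∈ s, dist x w ≤ ε := by
  obtain ⟨t, ht, hcov⟩ :=
    (totallyBounded_iff.mp (isCompact_univ : IsCompact (univ : Set X)).totallyBounded) ε hε
  refine ⟨ht.toFinset, fun x => ?_⟩
  have hx : x ∈ ⋃ y ∈ t, ball y ε := hcov (mem_univ x)
  obtain ⟨y, hy, hxy⟩ := mem_iUnion₂.mp hx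
  exact ⟨y, ht.mem_toFinset.mpr hy, le_of_lt (mem_ball.mp hxy)⟩

noncomputable def net (f : X → X) (hf : Continuous f) (n : ℕ) : Finset X :=
  (exists_net (eta f hf n) (eta_pos f hf n)).choose

lemma net_spec (f : X → X) (hf : Continuous f) (n : ℕ) :
    ∀ x : X, ∃ w ∈ net f hf n, dist x w ≤ eta f hf n :=
  (exists_net (eta f hf n) (eta_pos f hf n)).choose_spec

/-- the cell determined by a history of centers -/
def cellOf (f : X → X) (hf : Continuous f) {n : ℕ} (l : Fin n → X) : Set X :=
  ⋂ k : Fin n, closedBall (l k) (eta f hf ((k : ℕ) + 1))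

def Vtx (f : X → X) (hf : Continuous f) (n : ℕ) : Type :=
  {l : Fin n → X // (∀ k : Fin n, l k ∈ net f hf ((k : ℕ) + 1)) ∧ (cellOf f hf l).Nonempty}

noncomputable def cell (f : X → X) (hf : Continuous f) {n : ℕ} (v : Vtx f hf n) : Set X :=
  cellOf f hf v.1

lemma cell_nonempty (f : X → X) (hf : Continuous f) {n : ℕ} (v : Vtx f hf n) :
    (cell f hf v).Nonempty := v.2.2

lemma cell_isClosed (f : X → X) (hf : Continuous f) {n : ℕ} (v : Vtx f hf n) :
    IsClosed (cell f hf v) := isClosed_iInter fun _ => isClosed_closedBall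

lemma cell_diam (f : X → X) (hf : Continuous f) {n : ℕ} (v : Vtx f hf (n + 1))
    {x y : X} (hx : x ∈ cell f hf v) (hy : y ∈ cell f hf v) :
    dist x y ≤ 2 * eta f hf (n + 1) := by
  have hx' : x ∈ closedBall (v.1 (Fin.last n)) (eta f hf ((Fin.last n : ℕ) + 1)) :=
    mem_iInter.mp hx (Fin.last n)
  have hy' : y ∈ closedBall (v.1 (Fin.last n)) (eta f hf ((Fin.last n : ℕ) + 1)) :=
    mem_iInter.mp hy (Fin.last n)
  simp only [Fin.val_last, mem_closedBall] at hx' hy'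
  calc dist x y ≤ dist x (v.1 (Fin.last n)) + dist (v.1 (Fin.last n)) y := dist_triangle _ _ _
    _ ≤ _ := by rw [dist_comm (v.1 (Fin.last n)) y]; linarith

noncomputable def res (f : X → X) (hf : Continuous f) {n : ℕ} (v : Vtx f hf (n + 1)) :
    Vtx f hf n :=
  ⟨fun k => v.1 k.castSucc,
   fun k => by simpa using v.2.1 k.castSucc,
   v.2.2.mono (by
     intro x hx
     refine mem_iInter.mpr fun k => ?_
     simpa using mem_iInter.mp hx k.castSucc)⟩

lemma cell_res (f : X → X) (hf : Continuous f) {n : ℕ} (v : Vtx f hf (n + 1)) :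
    cell f hf v ⊆ cell f hf (res f hf v) := by
  intro x hx
  refine mem_iInter.mpr fun k => ?_
  simpa [res] using mem_iInter.mp hx k.castSucc

lemma extend (f : X → X) (hf : Continuous f) {n : ℕ} (v : Vtx f hf n) {x : X}
    (hx : x ∈ cell f hf v) :
    ∃ v' : Vtx f hf (n + 1), res f hf v' = v ∧ x ∈ cell f hf v' := by
  obtain ⟨w, hw, hdw⟩ := net_spec f hf (n + 1) x
  refine ⟨⟨Fin.snoc v.1 w, fun k => ?_, ⟨x, ?_⟩⟩, ?_, ?_⟩
  · induction k using Fin.lastCases with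
    | last => simpa using hw
    | cast k => simpa using v.2.1 k
  · refine mem_iInter.mpr fun k => ?_
    induction k using Fin.lastCases with
    | last => simpa using hdw
    | cast k => simpa using mem_iInter.mp hx k
  · apply Subtype.ext
    funext k
    simp [res, Fin.snoc_castSucc]
  · refine mem_iInter.mpr fun k => ?_
    induction k using Fin.lastCases with
    | last => simpa using hdw
    | cast k => simpa using mem_iInter.mp hx k

end Aux

end Aux

section Aux2

variable {X : Type} [MetricSpace X] [CompactSpace X] [Nonempty X]

lemma vtx_finite (f : X → X) (hf : Continuous f) (n : ℕ) : Finite (Vtx f hf n) := by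
  have : Finite (∀ k : Fin n, {x : X // x ∈ net f hf ((k : ℕ) + 1)}) := by
    infer_instance
  refine Finite.of_injective
    (fun v : Vtx f hf n => fun k : Fin n => (⟨v.1 k, v.2.1 k⟩ : {x : X // x ∈ net f hf ((k : ℕ) + 1)}))
    ?_
  intro u v h
  apply Subtype.ext; funext k
  exact congrArg Subtype.val (congrFun h k)

noncomputable def vtx0 (f : X → X) (hf : Continuous f) : Vtx f hf 0 :=
  ⟨fun k => k.elim0, fun k => k.elim0,
   ⟨Classical.arbitrary X, mem_iInter.mpr fun k => k.elim0⟩⟩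

lemma vtx0_unique (f : X → X) (hf : Continuous f) (v w : Vtx f hf 0) : v = w := by
  apply Subtype.ext; funext k; exact k.elim0

lemma cover (f : X → X) (hf : Continuous f) (x : X) : ∀ n, ∃ v : Vtx f hf n, x ∈ cell f hf v
  | 0 => ⟨vtx0 f hf, mem_iInter.mpr fun k => k.elim0⟩
  | n + 1 => by
      obtain ⟨v, hv⟩ := cover f hf x n
      obtain ⟨v', _, hv'⟩ := extend f hf v hv
      exact ⟨v', hv'⟩

noncomputable def seq (f : X → X) (hf : Continuous f) : TwinnedSeq where
  V n := Vtx f hf n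
  fintype n := @Fintype.ofFinite _ (vtx_finite f hf n)
  EG n u v := ∃ x : X, x ∈ cell f hf u ∧ f x ∈ cell f hf v
  EF n u v := ∃ x y : X, x ∈ cell f hf u ∧ y ∈ cell f hf v ∧ dist x y ≤ eta f hf n
  φ n := res f hf
  ds0_nonempty := ⟨vtx0 f hf⟩
  ds0_subsingleton := vtx0_unique f hf
  ds1_hom := by
    rintro i u v ⟨x, hxu, hxv⟩
    exact ⟨x, cell_res f hf u hxu, cell_res f hf v hxv⟩
  ds1_edge_surj := by
    rintro i u v ⟨x, hxu, hxv⟩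
    obtain ⟨a, ha, hxa⟩ := extend f hf u hxu
    obtain ⟨b, hb, hxb⟩ := extend f hf v hxv
    exact ⟨a, b, ⟨x, hxa, hxb⟩, ha, hb⟩
  ds1_out := by
    intro i v
    obtain ⟨x, hx⟩ := cell_nonempty f hf v
    obtain ⟨w, hw⟩ := cover f hf (f x) i
    exact ⟨w, x, hx, hw⟩
  ds2_hom := by
    rintro i u v ⟨x, y, hx, hy, hd⟩
    exact ⟨x, y, cell_res f hf u hx, cell_res f hf v hy,
      le_trans hd (eta_mono f hf i)⟩
  ds2_symm := by
    rintro i u v ⟨x, y, hx, hy, hd⟩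
    exact ⟨y, x, hy, hx, by rwa [dist_comm]⟩
  ds2_refl := by
    intro i v
    obtain ⟨x, hx⟩ := cell_nonempty f hf v
    exact ⟨x, x, hx, hx, by simp [le_of_lt (eta_pos f hf i)]⟩
  ds3 := by
    rintro i a b a' b' ⟨x, x', hxa, hxb, hd⟩ ⟨y, hya, hya'⟩ ⟨z, hzb, hzb'⟩
    refine ⟨f y, f z, cell_res f hf a' hya', cell_res f hf b' hzb', ?_⟩
    apply eta_contract f hf i
    have h1 := cell_diam f hf a hya hxa
    have h2 := cell_diam f hf b hxb hzb
    calc dist y z ≤ dist y x + dist x x' + dist x' z :=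
          dist_triangle4 y x x' z
      _ ≤ 5 * eta f hf (i + 1) := by
          have h3 : dist x' z ≤ 2 * eta f hf (i + 1) := cell_diam f hf b hxb hzb
          have h4 : dist y x ≤ 2 * eta f hf (i + 1) := cell_diam f hf a hya hxa
          linarith
  ds3b := by
    rintro i a b c ⟨x, x', hxa, hxb, hd⟩ ⟨y, y', hyb, hyc, hd'⟩
    refine ⟨x, y', cell_res f hf a hxa, cell_res f hf c hyc, ?_⟩
    have h1 := cell_diam f hf b hxb hyb
    have h2 := eta_succ_le f hf i
    have h3 := eta_pos f hf (i+1)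
    calc dist x y' ≤ dist x x' + dist x' y + dist y y' := dist_triangle4 x x' y y'
      _ ≤ eta f hf i := by
          have hx'y : dist x' y ≤ 2 * eta f hf (i+1) := cell_diam f hf b hxb hyb
          linarith


end Aux2

section Aux3

variable {X : Type} [MetricSpace X] [CompactSpace X] [Nonempty X]

lemma twlimit_compact (S : TwinnedSeq) : CompactSpace (TwLimit S) := by
  letI : ∀ i, TopologicalSpace (S.V i) := fun _ => ⊥
  haveI : ∀ i, DiscreteTopology (S.V i) := fun i => ⟨rfl⟩
  haveI : ∀ i, Finite (S.V i) := fun i => @Finite.of_fintype _ (S.fintype i)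
  have hclosed : IsClosed {x : ∀ i, S.V i | ∀ i, x i = S.φ i (x (i + 1))} := by
    have h : ∀ i : ℕ, IsClosed {x : ∀ j, S.V j | x i = S.φ i (x (i + 1))} := fun i =>
      isClosed_eq (continuous_apply i)
        ((continuous_of_discreteTopology).comp (continuous_apply (i + 1)))
    have : {x : ∀ i, S.V i | ∀ i, x i = S.φ i (x (i + 1))} =
        ⋂ i, {x : ∀ j, S.V j | x i = S.φ i (x (i + 1))} := by
      ext x; simp [Set.mem_iInter]
    rw [this]
    exact isClosed_iInter h
  exact isCompact_iff_compactSpace.mp hclosed.isCompact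

variable (f : X → X) (hf : Continuous f)

lemma lim_cell_mono (x : TwLimit (seq f hf)) (i : ℕ) :
    cell f hf (x.1 (i + 1)) ⊆ cell f hf (x.1 i) := by
  have h : x.1 i = res f hf (x.1 (i + 1)) := x.2 i
  rw [h]
  exact cell_res f hf _

lemma lim_inter_nonempty (x : TwLimit (seq f hf)) :
    (⋂ i, cell f hf (x.1 i)).Nonempty :=
  IsCompact.nonempty_iInter_of_sequence_nonempty_isCompact_isClosed
    (fun i => cell f hf (x.1 i)) (lim_cell_mono f hf x)
    (fun i => cell_nonempty f hf (x.1 i))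
    ((cell_isClosed f hf (x.1 0)).isCompact)
    (fun i => cell_isClosed f hf (x.1 i))

noncomputable def pmap (x : TwLimit (seq f hf)) : X := (lim_inter_nonempty f hf x).choose

lemma pmem (x : TwLimit (seq f hf)) (i : ℕ) : pmap f hf x ∈ cell f hf (x.1 i) :=
  Set.mem_iInter.mp (lim_inter_nonempty f hf x).choose_spec i

lemma eq_of_le_eta {a b : X} (h : ∀ i : ℕ, dist a b ≤ 5 * eta f hf (i + 1)) : a = b := by
  apply eq_of_forall_dist_le
  intro ε hε
  obtain ⟨i, hi⟩ := exists_pow_lt_of_lt_one (show (0:ℝ) < ε / 5 by linarith)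
    (show (1/2 : ℝ) < 1 by norm_num)
  calc dist a b ≤ 5 * eta f hf (i + 1) := h i
    _ ≤ 5 * (1/2 : ℝ) ^ i := by linarith [eta_le_pow f hf i]
    _ ≤ ε := by linarith

lemma limEF_iff (x y : TwLimit (seq f hf)) :
    limEF (seq f hf) x y ↔ pmap f hf x = pmap f hf y := by
  constructor
  · intro h
    apply eq_of_le_eta f hf
    intro i
    obtain ⟨a, b, ha, hb, hab⟩ := h (i + 1)
    have h1 := cell_diam f hf (x.1 (i + 1)) (pmem f hf x (i + 1)) ha
    have h2 := cell_diam f hf (y.1 (i + 1)) hb (pmem f hf y (i + 1))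
    calc dist (pmap f hf x) (pmap f hf y)
        ≤ dist (pmap f hf x) a + dist a b + dist b (pmap f hf y) := dist_triangle4 _ _ _ _
      _ ≤ 5 * eta f hf (i + 1) := by linarith
  · intro h i
    refine ⟨pmap f hf x, pmap f hf y, pmem f hf x i, pmem f hf y i, ?_⟩
    rw [h, dist_self]
    exact le_of_lt (eta_pos f hf i)

noncomputable def chain (z : X) : ∀ i, {v : Vtx f hf i // z ∈ cell f hf v}
  | 0 => ⟨vtx0 f hf, Set.mem_iInter.mpr fun k => k.elim0⟩
  | i + 1 => ⟨(extend f hf (chain z i).1 (chain z i).2).choose,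
      (extend f hf (chain z i).1 (chain z i).2).choose_spec.2⟩

lemma chain_coh (z : X) (i : ℕ) :
    res f hf (chain f hf z (i + 1)).1 = (chain f hf z i).1 :=
  (extend f hf (chain f hf z i).1 (chain f hf z i).2).choose_spec.1

lemma pmap_surj (z : X) : ∃ x : TwLimit (seq f hf), pmap f hf x = z := by
  refine ⟨⟨fun i => (chain f hf z i).1, fun i => (chain_coh f hf z i).symm⟩, ?_⟩
  apply eq_of_le_eta f hf
  intro i
  have h1 := cell_diam f hf (chain f hf z (i + 1)).1
    (pmem f hf ⟨fun i => (chain f hf z i).1, fun i => (chain_coh f hf z i).symm⟩ (i + 1))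
    (chain f hf z (i + 1)).2
  have := eta_pos f hf (i + 1)
  linarith

lemma pmap_EG (x y : TwLimit (seq f hf)) (h : limEG (seq f hf) x y) :
    f (pmap f hf x) = pmap f hf y := by
  apply eq_of_le_eta f hf
  intro i
  obtain ⟨w, hwx, hwy⟩ := h (i + 2)
  have h1 : dist w (pmap f hf x) ≤ 2 * eta f hf (i + 2) :=
    cell_diam f hf (x.1 (i + 2)) hwx (pmem f hf x (i + 2))
  have h2 : dist (f w) (f (pmap f hf x)) ≤ eta f hf (i + 1) := by
    apply eta_contract f hf (i + 1)
    have := eta_pos f hf (i + 2)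
    linarith
  have h3 : dist (f w) (pmap f hf y) ≤ 2 * eta f hf (i + 2) :=
    cell_diam f hf (y.1 (i + 2)) hwy (pmem f hf y (i + 2))
  have h4 : eta f hf (i + 2) ≤ eta f hf (i + 1) := eta_mono f hf (i + 1)
  have h5 : 0 < eta f hf (i + 1) := eta_pos f hf (i + 1)
  calc dist (f (pmap f hf x)) (pmap f hf y)
      ≤ dist (f (pmap f hf x)) (f w) + dist (f w) (pmap f hf y) := dist_triangle _ _ _
    _ ≤ 5 * eta f hf (i + 1) := by rw [dist_comm (f (pmap f hf x)) (f w)]; linarith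

lemma pmap_continuous : Continuous (pmap f hf) := by
  rw [continuous_iff_continuousAt]
  intro x
  rw [ContinuousAt, Metric.tendsto_nhds]
  intro ε hε
  obtain ⟨i, hi⟩ := exists_pow_lt_of_lt_one (show (0:ℝ) < ε / 5 by linarith)
    (show (1/2 : ℝ) < 1 by norm_num)
  letI : ∀ j, TopologicalSpace ((seq f hf).V j) := fun _ => ⊥
  haveI : ∀ j, DiscreteTopology ((seq f hf).V j) := fun j => ⟨rfl⟩
  have hcont : Continuous fun y : TwLimit (seq f hf) => y.1 (i + 1) :=
    (continuous_apply (i + 1)).comp continuous_subtype_val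
  have hU : {y : TwLimit (seq f hf) | y.1 (i + 1) = x.1 (i + 1)} ∈ nhds x := by
    have : IsOpen {y : TwLimit (seq f hf) | y.1 (i + 1) = x.1 (i + 1)} :=
      (isOpen_discrete {x.1 (i + 1)}).preimage hcont
    exact this.mem_nhds rfl
  refine Filter.eventually_of_mem hU fun y hy => ?_
  have hy' : (y : TwLimit (seq f hf)).1 (i + 1) = x.1 (i + 1) := hy
  have h1 : pmap f hf y ∈ cell f hf (x.1 (i + 1)) := by
    rw [← hy']; exact pmem f hf y (i + 1)
  have h2 := cell_diam f hf (x.1 (i + 1)) h1 (pmem f hf x (i + 1))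
  have h3 := eta_le_pow f hf i
  have h4 := eta_pos f hf (i + 1)
  calc dist (pmap f hf y) (pmap f hf x) ≤ 2 * eta f hf (i + 1) := h2
    _ ≤ 2 * (1/2 : ℝ) ^ i := by linarith
    _ < ε := by linarith


end Aux3

/-- **Main theorem.** Every dynamical system `(X, f)` (`X` a nonempty compact metric
space, `f` continuous, not necessarily surjective) is topologically conjugate to the
quotient system `(Y, T)` induced by some inverse sequence of twinned graph
homomorphisms, where `Y = V_G / E_F` with the quotient topology and `T` is the unique
continuous map with `T(π x) = π y` whenever `(x, y) ∈ E_G`: there is a homeomorphism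
`ψ : Y → X` with `f ∘ ψ = ψ ∘ T`. -/
theorem conjugate_to_twinned_limit {X : Type} [MetricSpace X] [CompactSpace X]
    [Nonempty X] (f : X → X) (hf : Continuous f) :
    ∃ (S : TwinnedSeq) (T : Quot (limEF S) → Quot (limEF S)),
      Continuous T ∧
      (∀ x y : TwLimit S, limEG S x y →
        T (Quot.mk (limEF S) x) = Quot.mk (limEF S) y) ∧
      ∃ ψ : Quot (limEF S) → X, IsHomeomorph ψ ∧ f ∘ ψ = ψ ∘ T := by
  classical
  refine ⟨seq f hf, ?_⟩
  set S := seq f hf with hS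
  have hwd : ∀ x y : TwLimit S, limEF S x y → pmap f hf x = pmap f hf y :=
    fun x y h => (limEF_iff f hf x y).mp h
  let p : Quot (limEF S) → X := Quot.lift (pmap f hf) hwd
  have hpc : Continuous p := continuous_coinduced_dom.mpr (pmap_continuous f hf)
  have hinj : Function.Injective p := by
    intro a b
    refine Quot.induction_on₂ a b fun x y h => ?_
    exact Quot.sound ((limEF_iff f hf x y).mpr h)
  have hsurj : Function.Surjective p := by
    intro z
    obtain ⟨x, hx⟩ := pmap_surj f hf z
    exact ⟨Quot.mk _ x, hx⟩
  haveI := twlimit_compact S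
  let e : Quot (limEF S) ≃ X := Equiv.ofBijective p ⟨hinj, hsurj⟩
  have he : Continuous e := hpc
  let h : Quot (limEF S) ≃ₜ X := he.homeoOfEquivCompactToT2
  refine ⟨fun q => h.symm (f (p q)), ?_, ?_, p, ?_, ?_⟩
  · exact h.symm.continuous.comp (hf.comp hpc)
  · intro x y hxy
    show h.symm (f (p (Quot.mk _ x))) = Quot.mk (limEF S) y
    have : f (p (Quot.mk (limEF S) x)) = p (Quot.mk (limEF S) y) := pmap_EG f hf x y hxy
    rw [this]
    exact h.symm_apply_apply (Quot.mk (limEF S) y)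
  · exact h.isHomeomorph
  · funext q
    exact (h.apply_symm_apply (f (p q))).symm
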